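/- Suppose the data is split into two independent parts ((X^(1), y^(1)) and (X^(2), y^(2))) with i.i.d. rows; knockoffs for part 2 are constructed as valid model-free knockoffs X̃^(2) (using Lemma 3.2's exchangeability), while for part 1 one sets X̃^(1) = X^(1). Then for any subset S ⊆ H_0 of null variables, the combined data satisfies ([X, X̃]_{swap(S)}, y) =_d ([X, X̃], y), so the knockoff filter applied to the combined data retains FDR control. -/
import Mathlib


open MeasureTheory ProbabilityTheory

/-- Swap originals and knockoffs on the coordinates in `S`. -/
def pairSwap {p : ℕ} {𝒳 : Type*} (S : Finset (Fin p))
    (v : (Fin p → 𝒳) × (Fin p → 𝒳)) : (Fin p → 𝒳) × (Fin p → 𝒳) :=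
  (fun i => if i ∈ S then v.2 i else v.1 i, fun i => if i ∈ S then v.1 i else v.2 i)

lemma pairSwap_diag {p : ℕ} {𝒳 : Type*} (S : Finset (Fin p)) (x : Fin p → 𝒳) :
    pairSwap S (x, x) = (x, x) := by
  unfold pairSwap
  refine Prod.ext ?_ ?_ <;> · simp only; funext i; split <;> rfl

@[measurability, fun_prop]
lemma measurable_pairSwap {p : ℕ} {𝒳 : Type*} [MeasurableSpace 𝒳] (S : Finset (Fin p)) :
    Measurable (pairSwap (𝒳 := 𝒳) S) := by
  unfold pairSwap
  refine Measurable.prod ?_ ?_ <;>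
  · refine measurable_pi_lambda _ fun i => ?_
    by_cases h : i ∈ S <;> simp only [h, if_true, if_false] <;>
      exact (measurable_pi_apply i).comp (by measurability)

/-- Knockoffs with a selection subsample: if the data is split into two independent parts, the
knockoffs for part 1 are taken to be identical copies of the originals (`X̃⁽¹⁾ = X⁽¹⁾`), and the
knockoffs for part 2 satisfy null-swap exchangeability, then the combined data satisfies
null-swap exchangeability: for any subset `S ⊆ H₀` of null variables,
`([X, X̃]_{swap(S)}, y) =_d ([X, X̃], y)`. -/
theorem split_knockoffs_null_swap_exchangeable
    {Ω : Type*} [MeasurableSpace Ω] {μ : Measure Ω} [IsProbabilityMeasure μ]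
    {p n₁ n₂ : ℕ}
    (X₁ : Ω → Fin n₁ → Fin p → ℝ) (y₁ : Ω → Fin n₁ → ℝ)
    (X₂ Xt₂ : Ω → Fin n₂ → Fin p → ℝ) (y₂ : Ω → Fin n₂ → ℝ)
    (hX₁ : Measurable X₁) (hy₁ : Measurable y₁)
    (hX₂ : Measurable X₂) (hXt₂ : Measurable Xt₂) (hy₂ : Measurable y₂)
    (hparts : IndepFun (fun ω => (X₁ ω, y₁ ω)) (fun ω => (X₂ ω, Xt₂ ω, y₂ ω)) μ)
    (H₀ : Finset (Fin p))
    (hexch₂ : ∀ S : Finset (Fin p), S ⊆ H₀ →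
      μ.map (fun ω => ((fun r => pairSwap S (X₂ ω r, Xt₂ ω r)), y₂ ω))
        = μ.map (fun ω => ((fun r => (X₂ ω r, Xt₂ ω r)), y₂ ω))) :
    ∀ S : Finset (Fin p), S ⊆ H₀ →
      μ.map (fun ω =>
          ((fun r => pairSwap S (X₁ ω r, X₁ ω r)),
           (fun r => pairSwap S (X₂ ω r, Xt₂ ω r)), y₁ ω, y₂ ω))
        = μ.map (fun ω =>
          ((fun r => (X₁ ω r, X₁ ω r)),
           (fun r => (X₂ ω r, Xt₂ ω r)), y₁ ω, y₂ ω)) := by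
  intro S hS
  -- abbreviations
  set A : Ω → (Fin n₁ → Fin p → ℝ) × (Fin n₁ → ℝ) := fun ω => (X₁ ω, y₁ ω) with hA
  set Bs : Ω → (Fin n₂ → (Fin p → ℝ) × (Fin p → ℝ)) × (Fin n₂ → ℝ) :=
    fun ω => ((fun r => pairSwap S (X₂ ω r, Xt₂ ω r)), y₂ ω) with hBs
  set B : Ω → (Fin n₂ → (Fin p → ℝ) × (Fin p → ℝ)) × (Fin n₂ → ℝ) :=
    fun ω => ((fun r => (X₂ ω r, Xt₂ ω r)), y₂ ω) with hB
  have hφs : Measurable (fun q : (Fin n₂ → Fin p → ℝ) × (Fin n₂ → Fin p → ℝ) × (Fin n₂ → ℝ) =>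
      ((fun r => pairSwap S (q.1 r, q.2.1 r)), q.2.2)) := by
    fun_prop
  have hφ : Measurable (fun q : (Fin n₂ → Fin p → ℝ) × (Fin n₂ → Fin p → ℝ) × (Fin n₂ → ℝ) =>
      ((fun r => (q.1 r, q.2.1 r)), q.2.2)) := by
    fun_prop
  have hAmeas : Measurable A := hX₁.prodMk hy₁
  have hBsmeas : Measurable Bs := hφs.comp (hX₂.prodMk (hXt₂.prodMk hy₂))
  have hBmeas : Measurable B := hφ.comp (hX₂.prodMk (hXt₂.prodMk hy₂))
  have hindS : IndepFun A Bs μ := hparts.comp measurable_id hφs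
  have hind : IndepFun A B μ := hparts.comp measurable_id hφ
  have hjoint : μ.map (fun ω => (A ω, Bs ω)) = μ.map (fun ω => (A ω, B ω)) := by
    rw [(indepFun_iff_map_prod_eq_prod_map_map hAmeas.aemeasurable
          hBsmeas.aemeasurable).mp hindS,
        (indepFun_iff_map_prod_eq_prod_map_map hAmeas.aemeasurable
          hBmeas.aemeasurable).mp hind,
        hexch₂ S hS]
  -- the rearrangement map
  set G : ((Fin n₁ → Fin p → ℝ) × (Fin n₁ → ℝ)) ×
      ((Fin n₂ → (Fin p → ℝ) × (Fin p → ℝ)) × (Fin n₂ → ℝ)) →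
      (Fin n₁ → (Fin p → ℝ) × (Fin p → ℝ)) × (Fin n₂ → (Fin p → ℝ) × (Fin p → ℝ)) ×
      (Fin n₁ → ℝ) × (Fin n₂ → ℝ) :=
    fun q => ((fun r => (q.1.1 r, q.1.1 r)), q.2.1, q.1.2, q.2.2) with hG
  have hGmeas : Measurable G := by
    simp only [hG]
    fun_prop
  have e1 : (fun ω =>
      ((fun r => pairSwap S (X₁ ω r, X₁ ω r)),
       (fun r => pairSwap S (X₂ ω r, Xt₂ ω r)), y₁ ω, y₂ ω))
      = G ∘ (fun ω => (A ω, Bs ω)) := by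
    funext ω
    simp only [hG, Function.comp, hA, hBs, pairSwap_diag]
  have e2 : (fun ω =>
      ((fun r => (X₁ ω r, X₁ ω r)),
       (fun r => (X₂ ω r, Xt₂ ω r)), y₁ ω, y₂ ω))
      = G ∘ (fun ω => (A ω, B ω)) := by
    funext ω
    simp only [hG, Function.comp, hA, hB]
  rw [e1, e2, ← Measure.map_map hGmeas (hAmeas.prodMk hBsmeas),
    ← Measure.map_map hGmeas (hAmeas.prodMk hBmeas), hjoint]
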